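/- arXiv:1911.05501 — 2 statements merged into one kernel-verified Lean document; each statement's English description precedes it below -/
import Mathlib

section
/- Let H be a multigraph in which every vertex has degree at most D and any two vertices are joined by at most μ parallel edges. Then the edge set of H can be decomposed into at most D + μ matchings. -/
open Finset

namespace VizingMG

variable {V E : Type*}

section Defs
variable (ends : E → Sym2 V) {N : ℕ}

/-- proper partial edge coloring -/
def Proper (c : E → Option (Fin N)) : Prop :=
  ∀ ⦃e f : E⦄, e ≠ f → (∃ w, w ∈ ends e ∧ w ∈ ends f) →
    ∀ ⦃γ : Fin N⦄, c e = some γ → c f ≠ some γ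

/-- color γ is missing at vertex x -/
def Missing (c : E → Option (Fin N)) (x : V) (γ : Fin N) : Prop :=
  ∀ ⦃e⦄, x ∈ ends e → c e ≠ some γ

/-- fan levels: edges reachable in the multifan at u w.r.t. uncolored edge e₀ -/
def FanN (c : E → Option (Fin N)) (e₀ : E) (u : V) : ℕ → E → Prop
  | 0, f => f = e₀
  | n+1, f => FanN c e₀ u n f ∨
      (u ∈ ends f ∧ ∃ γ, c f = some γ ∧ ∃ g v, FanN c e₀ u n g ∧ v ∈ ends g ∧ v ≠ u ∧
        Missing ends c v γ)

/-- edge colored a or b -/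
def ABE (c : E → Option (Fin N)) (a b : Fin N) (e : E) : Prop :=
  c e = some a ∨ c e = some b

/-- Kempe component levels from base edge g₀ -/
def CompN (c : E → Option (Fin N)) (a b : Fin N) (g₀ : E) : ℕ → E → Prop
  | 0, f => f = g₀
  | n+1, f => CompN c a b g₀ n f ∨
      (ABE c a b f ∧ ∃ g, CompN c a b g₀ n g ∧ ∃ w, w ∈ ends g ∧ w ∈ ends f)

def Comp (c : E → Option (Fin N)) (a b : Fin N) (g₀ f : E) : Prop :=
  ∃ n, CompN ends c a b g₀ n f

def swOpt {N : ℕ} (a b : Fin N) (x : Option (Fin N)) : Option (Fin N) :=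
  if x = some a then some b else if x = some b then some a else x

open Classical in
noncomputable def swapc (c : E → Option (Fin N)) (a b : Fin N) (g₀ : E) : E → Option (Fin N) :=
  fun e => if Comp ends c a b g₀ e then swOpt a b (c e) else c e

open Classical in
noncomputable def holes [Fintype E] (c : E → Option (Fin N)) : Finset E :=
  univ.filter (fun e => c e = none)

lemma mem_holes [Fintype E] {c : E → Option (Fin N)} {x : E} : x ∈ holes c ↔ c x = none := by
  classical
  simp [holes]

/-- c is a proper coloring with a minimal number of uncolored edges -/
def Minimal [Fintype E] (c : E → Option (Fin N)) : Prop :=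
  Proper ends c ∧ ∀ c' : E → Option (Fin N), Proper ends c' → (holes c).card ≤ (holes c').card

end Defs

section Sym2Lemmas
variable [DecidableEq V]

lemma sym2_exists_ne {s : Sym2 V} (h : ¬ s.IsDiag) : ∃ x y, x ≠ y ∧ s = s(x,y) := by
  induction s using Sym2.inductionOn with
  | hf x y => exact ⟨x, y, fun h' => h (h' ▸ Sym2.mk_isDiag_iff.mpr rfl), rfl⟩

lemma eq_pair_of_two_mem {s : Sym2 V} {x y : V} (hx : x ∈ s) (hy : y ∈ s) (hxy : x ≠ y) :
    s = s(x,y) := by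
  induction s using Sym2.inductionOn with
  | hf a b =>
    rcases Sym2.mem_iff.mp hx with rfl | rfl
    · rcases Sym2.mem_iff.mp hy with rfl | rfl
      · exact absurd rfl hxy
      · rfl
    · rcases Sym2.mem_iff.mp hy with rfl | rfl
      · exact Sym2.eq_swap
      · exact absurd rfl hxy

lemma mem_of_pair {x y z : V} (h : z ∈ s(x,y)) : z = x ∨ z = y := Sym2.mem_iff.mp h

lemma card_mem_filter [Fintype V] {ends : E → Sym2 V} (hloop : ∀ e : E, ¬ (ends e).IsDiag)
    (e : E) : (univ.filter (fun x : V => x ∈ ends e)).card = 2 := by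
  obtain ⟨x, y, hxy, hs⟩ := sym2_exists_ne (hloop e)
  have : (univ.filter (fun z : V => z ∈ ends e)) = {x, y} := by
    ext z
    simp [hs, Sym2.mem_iff]
  rw [this, card_insert_of_notMem (by simpa using hxy), card_singleton]

end Sym2Lemmas

section Fan
variable [DecidableEq V] {ends : E → Sym2 V} {N : ℕ} {c : E → Option (Fin N)} {e₀ : E} {u : V}

lemma fanN_zero_iff {f : E} : FanN ends c e₀ u 0 f ↔ f = e₀ := Iff.rfl

lemma fanN_succ_iff {n : ℕ} {f : E} : FanN ends c e₀ u (n+1) f ↔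
    (FanN ends c e₀ u n f ∨
      (u ∈ ends f ∧ ∃ γ, c f = some γ ∧ ∃ g v, FanN ends c e₀ u n g ∧ v ∈ ends g ∧ v ≠ u ∧
        Missing ends c v γ)) := Iff.rfl

lemma fanN_succ {n : ℕ} {f : E} (h : FanN ends c e₀ u n f) : FanN ends c e₀ u (n+1) f :=
  Or.inl h

lemma fanN_mono {n m : ℕ} (hnm : n ≤ m) {f : E} (h : FanN ends c e₀ u n f) :
    FanN ends c e₀ u m f := by
  induction hnm with
  | refl => exact h
  | step _ ih => exact fanN_succ ih

lemma fan_at_u (hu : u ∈ ends e₀) {n : ℕ} {f : E} (h : FanN ends c e₀ u n f) :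
    u ∈ ends f := by
  induction n with
  | zero => rwa [fanN_zero_iff.mp h]
  | succ n ih => rcases h with h | ⟨h, _⟩; exacts [ih h, h]

lemma fan_colored {n : ℕ} {f : E} (h : FanN ends c e₀ u n f) :
    f = e₀ ∨ ∃ γ, c f = some γ := by
  induction n with
  | zero => exact Or.inl (fanN_zero_iff.mp h)
  | succ n ih =>
    rcases h with h | ⟨_, γ, hγ, _⟩
    · exact ih h
    · exact Or.inr ⟨γ, hγ⟩

/-- the fan-rotation ("shift") lemma: we can move the hole from `e₀` to any fan edge,
keeping properness, the set of colors at `u`, and only recoloring fan edges with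
colors already present at `u`. -/
lemma shift [Fintype E] [DecidableEq E] (hc : Proper ends c) (he₀ : c e₀ = none)
    (hu : u ∈ ends e₀) :
    ∀ n (f : E), FanN ends c e₀ u n f →
    ∃ c' : E → Option (Fin N), Proper ends c' ∧ c' f = none ∧
      (∀ x, c' x ≠ c x → FanN ends c e₀ u n x) ∧
      (∀ x γ, c' x = some γ → c x ≠ some γ → ∃ h, u ∈ ends h ∧ c h = some γ) ∧
      (∀ γ : Fin N, (∃ h, u ∈ ends h ∧ c' h = some γ) ↔ (∃ h, u ∈ ends h ∧ c h = some γ)) ∧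
      (∀ x, c' x = none ↔ ((c x = none ∧ x ≠ e₀) ∨ x = f)) := by
  intro n
  induction n with
  | zero =>
    intro f hf
    rw [fanN_zero_iff] at hf
    subst hf
    refine ⟨c, hc, he₀, fun x hx => absurd rfl hx, fun x γ h h' => absurd h h',
      fun γ => Iff.rfl, fun x => ?_⟩
    constructor
    · intro hx
      by_cases hxe : x = f
      · exact Or.inr hxe
      · exact Or.inl ⟨hx, hxe⟩
    · rintro (⟨hx, _⟩ | rfl)
      · exact hx
      · exact he₀
  | succ n IH =>
    intro f hf
    by_cases hfn : FanN ends c e₀ u n f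
    · obtain ⟨c', h1, h2, h3, h4, h5, h6⟩ := IH f hfn
      exact ⟨c', h1, h2, fun x hx => fanN_succ (h3 x hx), h4, h5, h6⟩
    obtain ⟨hfu, af, hcf, g, v, hg, hvg, hvu, hmiss⟩ := hf.resolve_left hfn
    obtain ⟨c₁, hc₁p, hc₁g, hS7, hS4, hS5, hS6⟩ := IH g hg
    have hfg : f ≠ g := fun h => hfn (h ▸ hg)
    have hug : u ∈ ends g := fan_at_u hu hg
    have hendsg : ends g = s(u, v) := eq_pair_of_two_mem hug hvg (fun h => hvu h.symm)
    have hc₁f : c₁ f = some af := by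
      by_cases h : c₁ f = c f
      · rw [h, hcf]
      · exact absurd (hS7 f h) hfn
    -- uniqueness of color af at u under c₁
    have huniq : ∀ h, u ∈ ends h → c₁ h = some af → h = f := by
      intro h hhu hch
      by_contra hhf
      exact hc₁p (fun he => hhf he.symm) ⟨u, hfu, hhu⟩ hc₁f hch
    refine ⟨fun x => if x = g then some af else if x = f then none else c₁ x, ?_, ?_, ?_, ?_, ?_, ?_⟩
    · -- Proper
      intro e f' hne hsh γ hce hcf'
      simp only [] at hce hcf'
      by_cases heg : e = g
      · rw [if_pos heg] at hce
        have hγ : af = γ := by injection hce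
        by_cases hf'g : f' = g
        · exact hne (heg.trans hf'g.symm)
        by_cases hf'f : f' = f
        · rw [if_neg hf'g, if_pos hf'f] at hcf'; exact absurd hcf' (by simp)
        rw [if_neg hf'g, if_neg hf'f] at hcf'
        rw [← hγ] at hcf'
        obtain ⟨w, hwe, hwf'⟩ := hsh
        have hwg : w ∈ ends g := heg ▸ hwe
        rcases mem_of_pair (hendsg ▸ hwg) with rfl | rfl
        · exact hf'f (huniq f' hwf' hcf')
        · have hne' : c f' ≠ some af := hmiss hwf'
          have hch : c₁ f' ≠ c f' := fun h => hne' (h ▸ hcf')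
          have := fan_at_u hu (hS7 f' hch)
          exact hf'f (huniq f' this hcf')
      by_cases hef : e = f
      · rw [if_neg heg, if_pos hef] at hce; exact absurd hce (by simp)
      rw [if_neg heg, if_neg hef] at hce
      by_cases hf'g : f' = g
      · rw [if_pos hf'g] at hcf'
        have hγ : af = γ := by injection hcf'
        rw [← hγ] at hce
        obtain ⟨w, hwe, hwf'⟩ := hsh
        have hwg : w ∈ ends g := hf'g ▸ hwf'
        rcases mem_of_pair (hendsg ▸ hwg) with rfl | rfl
        · exact hef (huniq e hwe hce)
        · have hne' : c e ≠ some af := hmiss hwe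
          have hch : c₁ e ≠ c e := fun h => hne' (h ▸ hce)
          have := fan_at_u hu (hS7 e hch)
          exact hef (huniq e this hce)
      by_cases hf'f : f' = f
      · rw [if_neg hf'g, if_pos hf'f] at hcf'; exact absurd hcf' (by simp)
      rw [if_neg hf'g, if_neg hf'f] at hcf'
      exact hc₁p hne hsh hce hcf'
    · -- c' f = none
      simp [hfg]
    · -- S7
      intro x hx
      simp only [] at hx
      by_cases hxg : x = g
      · exact fanN_succ (hxg ▸ hg)
      by_cases hxf : x = f
      · exact hxf ▸ Or.inr ⟨hfu, af, hcf, g, v, hg, hvg, hvu, hmiss⟩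
      rw [if_neg hxg, if_neg hxf] at hx
      exact fanN_succ (hS7 x hx)
    · -- S4
      intro x γ hx hcx
      simp only [] at hx
      by_cases hxg : x = g
      · rw [if_pos hxg] at hx
        have hγ : af = γ := by injection hx
        exact ⟨f, hfu, hγ ▸ hcf⟩
      by_cases hxf : x = f
      · rw [if_neg hxg, if_pos hxf] at hx; exact absurd hx (by simp)
      rw [if_neg hxg, if_neg hxf] at hx
      exact hS4 x γ hx hcx
    · -- S5
      intro γ
      constructor
      · rintro ⟨h, hhu, hh⟩
        simp only [] at hh
        by_cases hhg : h = g
        · rw [if_pos hhg] at hh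
          have hγ : af = γ := by injection hh
          exact ⟨f, hfu, hγ ▸ hcf⟩
        by_cases hhf : h = f
        · rw [if_neg hhg, if_pos hhf] at hh; exact absurd hh (by simp)
        rw [if_neg hhg, if_neg hhf] at hh
        exact (hS5 γ).mp ⟨h, hhu, hh⟩
      · rintro hγ
        obtain ⟨h, hhu, hh⟩ := (hS5 γ).mpr hγ
        by_cases hhf : h = f
        · refine ⟨g, hug, ?_⟩
          simp only []
          rw [hhf, hc₁f] at hh
          exact hh
        by_cases hhg : h = g
        · rw [hhg, hc₁g] at hh; exact absurd hh (by simp)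
        exact ⟨h, hhu, by simp only []; rw [if_neg hhg, if_neg hhf]; exact hh⟩
    · -- S6
      intro x
      simp only []
      by_cases hxg : x = g
      · rw [if_pos hxg]
        simp only [reduceCtorEq, false_iff]
        rintro (⟨hx, hxe⟩ | rfl)
        · rcases fan_colored hg with hg0 | ⟨γ, hγ⟩
          · exact hxe (hxg.trans hg0)
          · rw [hxg, hγ] at hx; exact absurd hx (by simp)
        · exact hfg (hxg ▸ rfl)
      by_cases hxf : x = f
      · rw [if_neg hxg, if_pos hxf]
        exact ⟨fun _ => Or.inr hxf, fun _ => rfl⟩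
      rw [if_neg hxg, if_neg hxf, hS6 x]
      constructor
      · rintro (h | rfl)
        · exact Or.inl h
        · exact absurd rfl hxg
      · rintro (h | rfl)
        · exact Or.inl h
        · exact absurd rfl hxf

/-- If some fan vertex and `u` miss a common color, the coloring was not minimal. -/
lemma fanA [Fintype E] [DecidableEq E] (hmin : Minimal ends c) (he₀ : c e₀ = none)
    (hu : u ∈ ends e₀) {n : ℕ} {f : E} (hf : FanN ends c e₀ u n f)
    {v : V} (hv : v ∈ ends f) (hvu : v ≠ u) {γ : Fin N}
    (hvγ : Missing ends c v γ) (huγ : Missing ends c u γ) : False := by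
  obtain ⟨c', hp, hfnone, hS7, hS4, hS5, hS6⟩ := shift hmin.1 he₀ hu n f hf
  have hfu : u ∈ ends f := fan_at_u hu hf
  have hendsf : ends f = s(u, v) := eq_pair_of_two_mem hfu hv (fun h => hvu h.symm)
  have hnoγu : ∀ h, u ∈ ends h → c' h ≠ some γ := by
    intro h hh hch
    obtain ⟨h', hh', hch'⟩ := (hS5 γ).mp ⟨h, hh, hch⟩
    exact huγ hh' hch'
  have hnoγ : ∀ h, h ≠ f → (∃ w, w ∈ ends f ∧ w ∈ ends h) → c' h ≠ some γ := by
    intro h hhf hsh hch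
    obtain ⟨w, hwf, hwh⟩ := hsh
    rcases mem_of_pair (hendsf ▸ hwf) with rfl | rfl
    · exact hnoγu h hwh hch
    · by_cases hc : c h = some γ
      · exact hvγ hwh hc
      · obtain ⟨h', hh', hch'⟩ := hS4 h γ hch hc
        exact huγ hh' hch'
  have hp'' : Proper ends (fun x => if x = f then some γ else c' x) := by
    intro e f' hne hsh δ hce hcf'
    simp only [] at hce hcf'
    by_cases hef : e = f
    · rw [if_pos hef] at hce
      have hδ : γ = δ := by injection hce
      by_cases hf'f : f' = f
      · exact hne (hef.trans hf'f.symm)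
      rw [if_neg hf'f] at hcf'
      rw [← hδ] at hcf'
      exact hnoγ f' hf'f (hef ▸ hsh) hcf'
    rw [if_neg hef] at hce
    by_cases hf'f : f' = f
    · rw [if_pos hf'f] at hcf'
      have hδ : γ = δ := by injection hcf'
      rw [← hδ] at hce
      obtain ⟨w, hwe, hwf'⟩ := hsh
      exact hnoγ e hef ⟨w, hf'f ▸ hwf', hwe⟩ hce
    rw [if_neg hf'f] at hcf'
    exact hp hne hsh hce hcf'
  have hsub : holes (fun x => if x = f then some γ else c' x) ⊆ (holes c).erase e₀ := by
    intro x hx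
    rw [mem_holes] at hx
    by_cases hxf : x = f
    · rw [if_pos hxf] at hx; exact absurd hx (by simp)
    rw [if_neg hxf] at hx
    rcases (hS6 x).mp hx with ⟨h1, h2⟩ | h3
    · rw [mem_erase, mem_holes]
      exact ⟨h2, h1⟩
    · exact absurd h3 hxf
  have he₀h : e₀ ∈ holes c := mem_holes.mpr he₀
  have hlt : (holes (fun x => if x = f then some γ else c' x)).card < (holes c).card := by
    calc (holes (fun x => if x = f then some γ else c' x)).card
        ≤ ((holes c).erase e₀).card := card_le_card hsub
      _ < (holes c).card := by
          rw [card_erase_of_mem he₀h]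
          exact Nat.sub_lt (card_pos.mpr ⟨e₀, he₀h⟩) one_pos
  exact absurd (hmin.2 _ hp'') (not_le.mpr hlt)

end Fan

section Kempe
variable [DecidableEq V] {ends : E → Sym2 V} {N : ℕ} {c : E → Option (Fin N)}
  {a b : Fin N} {g₀ : E}

lemma compN_zero_iff {f : E} : CompN ends c a b g₀ 0 f ↔ f = g₀ := Iff.rfl

lemma compN_succ_iff {n : ℕ} {f : E} : CompN ends c a b g₀ (n+1) f ↔
    (CompN ends c a b g₀ n f ∨ (ABE c a b f ∧ ∃ g, CompN ends c a b g₀ n g ∧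
      ∃ w, w ∈ ends g ∧ w ∈ ends f)) := Iff.rfl

lemma comp_base : Comp ends c a b g₀ g₀ := ⟨0, rfl⟩

lemma compN_ab (hg : ABE c a b g₀) {n : ℕ} {f : E} (hf : CompN ends c a b g₀ n f) :
    ABE c a b f := by
  induction n with
  | zero => exact (compN_zero_iff.mp hf) ▸ hg
  | succ n ih => rcases hf with hf | ⟨h, _⟩; exacts [ih hf, h]

lemma comp_ab (hg : ABE c a b g₀) {f : E} (hf : Comp ends c a b g₀ f) : ABE c a b f := by
  obtain ⟨n, hn⟩ := hf; exact compN_ab hg hn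

lemma comp_step {g f : E} (hg : Comp ends c a b g₀ g) (hab : ABE c a b f)
    (hsh : ∃ w, w ∈ ends g ∧ w ∈ ends f) : Comp ends c a b g₀ f := by
  obtain ⟨n, hn⟩ := hg
  exact ⟨n+1, Or.inr ⟨hab, g, hn, hsh⟩⟩

lemma comp_trans {g₁ f : E} (h1 : Comp ends c a b g₀ g₁) (h2 : Comp ends c a b g₁ f) :
    Comp ends c a b g₀ f := by
  obtain ⟨n, hn⟩ := h2
  induction n generalizing f with
  | zero => exact (compN_zero_iff.mp hn) ▸ h1
  | succ n ih =>
    rcases hn with hn | ⟨habf, g2, hg2, hsh⟩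
    · exact ih hn
    · exact comp_step (ih hg2) habf hsh

lemma comp_symm (hg₀ : ABE c a b g₀) {f : E} (h : Comp ends c a b g₀ f) :
    Comp ends c a b f g₀ := by
  obtain ⟨n, hn⟩ := h
  induction n generalizing f with
  | zero => exact (compN_zero_iff.mp hn) ▸ comp_base
  | succ n ih =>
    rcases hn with hn | ⟨habf, g, hg, w, hw1, hw2⟩
    · exact ih hn
    · have hfg : Comp ends c a b f g := comp_step comp_base (compN_ab hg₀ hg) ⟨w, hw2, hw1⟩
      exact comp_trans hfg (ih hg)

lemma swapc_of_comp {e : E} (h : Comp ends c a b g₀ e) :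
    swapc ends c a b g₀ e = swOpt a b (c e) := by
  simp only [swapc]
  exact if_pos h

lemma swapc_of_not_comp {e : E} (h : ¬ Comp ends c a b g₀ e) :
    swapc ends c a b g₀ e = c e := by
  simp only [swapc]
  exact if_neg h

lemma swOpt_none : swOpt a b (none : Option (Fin N)) = none := by simp [swOpt]

lemma swOpt_a (hab : a ≠ b) : swOpt a b (some a) = some b := by simp [swOpt]

lemma swOpt_b (hab : a ≠ b) : swOpt a b (some b) = some a := by
  have h : (some b : Option (Fin N)) ≠ some a := by
    simpa using fun h => hab h.symm
  rw [swOpt, if_neg h, if_pos rfl]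

lemma swOpt_id {x : Option (Fin N)} (h1 : x ≠ some a) (h2 : x ≠ some b) :
    swOpt a b x = x := by
  rw [swOpt, if_neg h1, if_neg h2]

lemma swOpt_none_iff {x : Option (Fin N)} : swOpt a b x = none ↔ x = none := by
  rcases x with - | γ
  · simp [swOpt]
  · rw [swOpt]
    split_ifs <;> simp

lemma swOpt_inj (hab : a ≠ b) {x y : Option (Fin N)} (h : swOpt a b x = swOpt a b y) :
    x = y := by
  by_cases hx1 : x = some a <;> by_cases hy1 : y = some a <;>
    by_cases hx2 : x = some b <;> by_cases hy2 : y = some b <;>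
      simp_all [swOpt]

lemma swapc_none_iff {e : E} : swapc ends c a b g₀ e = none ↔ c e = none := by
  by_cases h : Comp ends c a b g₀ e
  · rw [swapc_of_comp h, swOpt_none_iff]
  · rw [swapc_of_not_comp h]

lemma swapc_proper (hab : a ≠ b) (hc : Proper ends c) (hg₀ : ABE c a b g₀) :
    Proper ends (swapc ends c a b g₀) := by
  intro e f hne hsh γ hce hcf
  by_cases hcompe : Comp ends c a b g₀ e <;> by_cases hcompf : Comp ends c a b g₀ f
  · rw [swapc_of_comp hcompe] at hce
    rw [swapc_of_comp hcompf] at hcf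
    have hcef : c e = c f := swOpt_inj hab (hce.trans hcf.symm)
    rcases hce' : c e with - | δ
    · rw [hce', swOpt_none] at hce; exact absurd hce (by simp)
    · exact hc hne hsh hce' (hcef ▸ hce')
  · rw [swapc_of_comp hcompe] at hce
    rw [swapc_of_not_comp hcompf] at hcf
    rcases comp_ab hg₀ hcompe with he | he <;> rw [he] at hce
    · rw [swOpt_a hab] at hce
      injection hce with hce
      rw [← hce] at hcf
      exact hcompf (comp_step hcompe (Or.inr hcf) hsh)
    · rw [swOpt_b hab] at hce
      injection hce with hce
      rw [← hce] at hcf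
      exact hcompf (comp_step hcompe (Or.inl hcf) hsh)
  · rw [swapc_of_not_comp hcompe] at hce
    rw [swapc_of_comp hcompf] at hcf
    obtain ⟨w, hw1, hw2⟩ := hsh
    rcases comp_ab hg₀ hcompf with hf | hf <;> rw [hf] at hcf
    · rw [swOpt_a hab] at hcf
      injection hcf with hcf
      rw [← hcf] at hce
      exact hcompe (comp_step hcompf (Or.inr hce) ⟨w, hw2, hw1⟩)
    · rw [swOpt_b hab] at hcf
      injection hcf with hcf
      rw [← hcf] at hce
      exact hcompe (comp_step hcompf (Or.inl hce) ⟨w, hw2, hw1⟩)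
  · rw [swapc_of_not_comp hcompe] at hce
    rw [swapc_of_not_comp hcompf] at hcf
    exact hc hne hsh hce hcf

lemma swapc_gained (hab : a ≠ b) (hg₀ : ABE c a b g₀) {e : E} {γ : Fin N}
    (h : swapc ends c a b g₀ e = some γ) (h2 : c e ≠ some γ) :
    Comp ends c a b g₀ e ∧ ((γ = a ∧ c e = some b) ∨ (γ = b ∧ c e = some a)) := by
  by_cases hcomp : Comp ends c a b g₀ e
  · refine ⟨hcomp, ?_⟩
    rcases comp_ab hg₀ hcomp with he | he <;> rw [swapc_of_comp hcomp, he] at h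
    · rw [swOpt_a hab] at h
      injection h with h
      exact Or.inr ⟨h.symm, he⟩
    · rw [swOpt_b hab] at h
      injection h with h
      exact Or.inl ⟨h.symm, he⟩
  · rw [swapc_of_not_comp hcomp] at h
    exact absurd h h2

lemma swapc_missing_untouched {x : V} (h : ∀ e, Comp ends c a b g₀ e → x ∉ ends e)
    {γ : Fin N} : Missing ends (swapc ends c a b g₀) x γ ↔ Missing ends c x γ := by
  constructor
  · intro hm e hxe
    have : ¬ Comp ends c a b g₀ e := fun hcomp => h e hcomp hxe
    rw [← swapc_of_not_comp this]
    exact hm hxe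
  · intro hm e hxe
    have : ¬ Comp ends c a b g₀ e := fun hcomp => h e hcomp hxe
    rw [swapc_of_not_comp this]
    exact hm hxe

end Kempe


section FanB
variable [DecidableEq V] [DecidableEq E] [Fintype E] {ends : E → Sym2 V} {N : ℕ}

/-- key lemma: if `v` is a fan vertex missing color `a`, `u` misses `b`, and `g` is the
`b`-colored edge at `v`, then the Kempe `(a,b)`-component of `g` contains an edge at `u`. -/
lemma fanB : ∀ n : ℕ, ∀ c : E → Option (Fin N), Minimal ends c →
    ∀ e₀ : E, c e₀ = none → ∀ u : V, u ∈ ends e₀ →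
    ∀ f : E, FanN ends c e₀ u n f → ∀ v : V, v ∈ ends f → v ≠ u →
    ∀ a b : Fin N, Missing ends c v a → Missing ends c u b →
    ∀ g : E, v ∈ ends g → c g = some b →
    ∃ h : E, u ∈ ends h ∧ Comp ends c a b g h := by
  intro n
  induction n using Nat.strong_induction_on with
  | _ n IH =>
  intro c hmin e₀ he₀ u hu f hf v hv hvu a b hva hub g hvg hgb
  by_contra hK
  push_neg at hK
  have hab : a ≠ b := by rintro rfl; exact hva hvg hgb
  have habg : ABE c a b g := Or.inr hgb
  have hKu : ∀ h, Comp ends c a b g h → u ∉ ends h := fun h hc hu' => (hK h hu') hc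
  have hc'p : Proper ends (swapc ends c a b g) := swapc_proper hab hmin.1 habg
  have hmin' : Minimal ends (swapc ends c a b g) := by
    refine ⟨hc'p, fun c'' hc'' => ?_⟩
    have hh : holes (swapc ends c a b g) = holes c := by
      ext x; rw [mem_holes, mem_holes, swapc_none_iff]
    rw [hh]; exact hmin.2 c'' hc''
  have hc'e₀ : swapc ends c a b g e₀ = none := swapc_none_iff.mpr he₀
  have hatu : ∀ h, u ∈ ends h → swapc ends c a b g h = c h :=
    fun h hh => swapc_of_not_comp (fun hc => hKu h hc hh)
  -- the fan transfers to the swapped coloring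
  have htrans : ∀ m, m ≤ n → ∀ x, FanN ends c e₀ u m x →
      FanN ends (swapc ends c a b g) e₀ u m x := by
    intro m
    induction m with
    | zero => intro _ x hx; exact hx
    | succ m ihm =>
      intro hmn x hx
      rcases hx with hx | ⟨hxu, γ, hcx, g', v', hg', hv'g', hv'u, hmiss⟩
      · exact fanN_succ (ihm (Nat.le_of_succ_le hmn) x hx)
      refine Or.inr ⟨hxu, γ, by rw [hatu x hxu]; exact hcx, g', v',
        ihm (Nat.le_of_succ_le hmn) g' hg', hv'g', hv'u, ?_⟩
      -- Missing (swapc) v' γ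
      intro y hy hyc
      have hyc2 : c y ≠ some γ := fun h => hmiss hy h
      obtain ⟨hcompy, hcase⟩ := swapc_gained hab habg hyc hyc2
      rcases hcase with ⟨hγa, hyb⟩ | ⟨hγb, hya⟩
      · -- γ = a : apply the outer induction hypothesis at level m < n
        have hm' : m < n := Nat.lt_of_lt_of_le (Nat.lt_succ_self m) hmn
        obtain ⟨h, hhu, hhcomp⟩ :=
          IH m hm' c hmin e₀ he₀ u hu g' hg' v' hv'g' hv'u a b (hγa ▸ hmiss) hub y hy hyb
        exact hKu h (comp_trans hcompy hhcomp) hhu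
      · -- γ = b : contradicts that b is missing at u
        exact hub hxu (hγb ▸ hcx)
  have hf' : FanN ends (swapc ends c a b g) e₀ u n f := htrans n le_rfl f hf
  -- after swapping, b is missing at v as well
  have hvb : Missing ends (swapc ends c a b g) v b := by
    intro y hy hyc
    by_cases hyg : y = g
    · rw [hyg, swapc_of_comp comp_base, hgb, swOpt_b hab] at hyc
      injection hyc with hyc; exact hab hyc
    · by_cases hcy : c y = some b
      · exact (hmin.1 hyg ⟨v, hy, hvg⟩ hcy) hgb
      · obtain ⟨-, hcase⟩ := swapc_gained hab habg hyc hcy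
        rcases hcase with ⟨hba, -⟩ | ⟨-, hya⟩
        · exact hab hba.symm
        · exact hva hy hya
  have hub' : Missing ends (swapc ends c a b g) u b :=
    (swapc_missing_untouched hKu).mpr hub
  exact fanA hmin' hc'e₀ hu hf' hv hvu hvb hub'

end FanB


section FanC
variable [DecidableEq V] [DecidableEq E] [Fintype E] [Fintype V] {ends : E → Sym2 V} {N : ℕ}
  {c : E → Option (Fin N)} {e₀ : E} {u : V}

lemma not_missing {x : V} {γ : Fin N} (h : ¬ Missing ends c x γ) :
    ∃ e, x ∈ ends e ∧ c e = some γ := by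
  by_contra hc
  push_neg at hc
  exact h (fun e he hce => hc e he hce)

open Classical in
lemma fanC (hloop : ∀ e : E, ¬ (ends e).IsDiag) (hmin : Minimal ends c)
    (he₀ : c e₀ = none) (hu : u ∈ ends e₀)
    {n n' : ℕ} {f f' : E} (hf : FanN ends c e₀ u n f) (hf' : FanN ends c e₀ u n' f')
    {v v' : V} (hv : v ∈ ends f) (hvu : v ≠ u) (hv' : v' ∈ ends f') (hv'u : v' ≠ u)
    (hvv' : v ≠ v') {γ : Fin N} (hγv : Missing ends c v γ) (hγv' : Missing ends c v' γ)
    {β : Fin N} (hβ : Missing ends c u β) : False := by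
  -- β is present at v and v'
  obtain ⟨g, hvg, hgβ⟩ := not_missing (fun hm => fanA hmin he₀ hu hf hv hvu hm hβ)
  obtain ⟨g', hvg', hg'β⟩ := not_missing (fun hm => fanA hmin he₀ hu hf' hv' hv'u hm hβ)
  have hγβ : γ ≠ β := fun h => hγv hvg (h ▸ hgβ)
  have habg : ABE c γ β g := Or.inr hgβ
  have habg' : ABE c γ β g' := Or.inr hg'β
  obtain ⟨h, hhu, hcomp⟩ := fanB n c hmin e₀ he₀ u hu f hf v hv hvu γ β hγv hβ g hvg hgβ
  obtain ⟨h', hhu', hcomp'⟩ := fanB n' c hmin e₀ he₀ u hu f' hf' v' hv' hv'u γ β hγv' hβ g' hvg' hg'β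
  have hhγ : c h = some γ := by
    rcases comp_ab habg hcomp with hh | hh
    · exact hh
    · exact absurd hh (hβ hhu)
  have hh'γ : c h' = some γ := by
    rcases comp_ab habg' hcomp' with hh | hh
    · exact hh
    · exact absurd hh (hβ hhu')
  have hhh' : h = h' := by
    by_contra hne
    exact hmin.1 hne ⟨u, hhu, hhu'⟩ hhγ hh'γ
  have hgg' : Comp ends c γ β g g' :=
    comp_trans hcomp (hhh' ▸ comp_symm habg' hcomp')
  -- the component as a finset
  set K : Finset E := univ.filter (fun e => Comp ends c γ β g e) with hK
  have hmemK : ∀ e, e ∈ K ↔ Comp ends c γ β g e := by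
    intro e; rw [hK, mem_filter]; simp
  have hgK : g ∈ K := (hmemK g).mpr comp_base
  have hhK : h ∈ K := (hmemK h).mpr hcomp
  have hg'K : g' ∈ K := (hmemK g').mpr hgg'
  set VK : Finset V := univ.filter (fun x => ∃ e ∈ K, x ∈ ends e) with hVK
  have hmemVK : ∀ x, x ∈ VK ↔ ∃ e ∈ K, x ∈ ends e := by
    intro x; rw [hVK, mem_filter]; simp
  -- all degrees in K are at most 2
  have hdeg2 : ∀ x : V, ((K.filter (fun e => x ∈ ends e)).card ≤ 2) := by
    intro x
    have hmaps : ∀ e ∈ K.filter (fun e => x ∈ ends e),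
        c e ∈ ({some γ, some β} : Finset (Option (Fin N))) := by
      intro e he
      rw [mem_filter] at he
      rcases comp_ab habg ((hmemK e).mp he.1) with hh | hh <;> simp [hh]
    have hinj : Set.InjOn c ↑(K.filter (fun e => x ∈ ends e)) := by
      intro e he e' he' hce
      rw [Finset.mem_coe, mem_filter] at he he'
      by_contra hne
      rcases comp_ab habg ((hmemK e).mp he.1) with hh | hh
      · exact hmin.1 hne ⟨x, he.2, he'.2⟩ hh (hce ▸ hh)
      · exact hmin.1 hne ⟨x, he.2, he'.2⟩ hh (hce ▸ hh)
    calc (K.filter (fun e => x ∈ ends e)).card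
        ≤ ({some γ, some β} : Finset (Option (Fin N))).card :=
          card_le_card_of_injOn c hmaps hinj
      _ ≤ 2 := (card_insert_le _ _).trans (by simp)
  -- degree exactly one at u, v, v'
  have hdegu : K.filter (fun e => u ∈ ends e) = {h} := by
    ext y
    rw [mem_filter, mem_singleton]
    constructor
    · rintro ⟨hyK, hyu⟩
      have hyγ : c y = some γ := by
        rcases comp_ab habg ((hmemK y).mp hyK) with hh | hh
        · exact hh
        · exact absurd hh (hβ hyu)
      by_contra hne
      exact hmin.1 hne ⟨u, hyu, hhu⟩ hyγ hhγ
    · rintro rfl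
      exact ⟨hhK, hhu⟩
  have hdegv : K.filter (fun e => v ∈ ends e) = {g} := by
    ext y
    rw [mem_filter, mem_singleton]
    constructor
    · rintro ⟨hyK, hyv⟩
      have hyβ : c y = some β := by
        rcases comp_ab habg ((hmemK y).mp hyK) with hh | hh
        · exact absurd hh (hγv hyv)
        · exact hh
      by_contra hne
      exact hmin.1 hne ⟨v, hyv, hvg⟩ hyβ hgβ
    · rintro rfl
      exact ⟨hgK, hvg⟩
  have hdegv' : K.filter (fun e => v' ∈ ends e) = {g'} := by
    ext y
    rw [mem_filter, mem_singleton]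
    constructor
    · rintro ⟨hyK, hyv⟩
      have hyβ : c y = some β := by
        rcases comp_ab habg ((hmemK y).mp hyK) with hh | hh
        · exact absurd hh (hγv' hyv)
        · exact hh
      by_contra hne
      exact hmin.1 hne ⟨v', hyv, hvg'⟩ hyβ hg'β
    · rintro rfl
      exact ⟨hg'K, hvg'⟩
  -- handshake
  have hhs : ∑ x ∈ (univ : Finset V), (K.filter (fun e => x ∈ ends e)).card = 2 * K.card := by
    calc ∑ x ∈ (univ : Finset V), (K.filter (fun e => x ∈ ends e)).card
        = ∑ x ∈ (univ : Finset V), ∑ e ∈ K, ite (x ∈ ends e) 1 0 := by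
          refine sum_congr rfl (fun x _ => ?_)
          rw [card_filter]
      _ = ∑ e ∈ K, ∑ x ∈ (univ : Finset V), ite (x ∈ ends e) 1 0 := sum_comm
      _ = ∑ e ∈ K, (univ.filter (fun x : V => x ∈ ends e)).card := by
          refine sum_congr rfl (fun e _ => ?_)
          rw [card_filter]
      _ = ∑ e ∈ K, 2 := sum_congr rfl (fun e _ => card_mem_filter hloop e)
      _ = 2 * K.card := by rw [sum_const, smul_eq_mul, mul_comm]
  -- VK is small: |VK| ≤ |K| + 1 via a min-level injection
  set lvl : E → ℕ := fun e => sInf {m | CompN ends c γ β g m e} with hlvl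
  have hlvl_spec : ∀ e ∈ K, CompN ends c γ β g (lvl e) e := by
    intro e he
    have : {m | CompN ends c γ β g m e}.Nonempty := (hmemK e).mp he
    exact Nat.sInf_mem this
  have hlvl_min : ∀ e, ∀ m, CompN ends c γ β g m e → lvl e ≤ m :=
    fun e m hm => Nat.sInf_le hm
  have hFex : ∀ x ∈ VK, ∃ e, (e ∈ K ∧ x ∈ ends e) ∧
      ∀ y ∈ K.filter (fun e => x ∈ ends e), lvl e ≤ lvl y := by
    intro x hx
    obtain ⟨e0, he0⟩ := (hmemVK x).mp hx
    obtain ⟨e, he, hemin⟩ := exists_min_image (K.filter (fun e => x ∈ ends e)) lvl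
      ⟨e0, mem_filter.mpr ⟨he0.1, he0.2⟩⟩
    rw [mem_filter] at he
    exact ⟨e, he, hemin⟩
  have hcard_inj : (VK.erase v).card ≤ K.card := by
    set F : V → E := fun x => if hx : x ∈ VK then (hFex x hx).choose else g with hF
    have hFspec : ∀ x (hx : x ∈ VK), (F x ∈ K ∧ x ∈ ends (F x)) ∧
        ∀ y ∈ K.filter (fun e => x ∈ ends e), lvl (F x) ≤ lvl y := by
      intro x hx
      rw [hF]
      simp only [dif_pos hx]
      exact (hFex x hx).choose_spec
    refine card_le_card_of_injOn F (fun x hx => ?_) ?_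
    · exact (hFspec x (mem_of_mem_erase hx)).1.1
    · intro x hx x' hx' hFxx'
      by_contra hne
      rw [Finset.mem_coe, mem_erase] at hx hx'
      obtain ⟨hxv, hxVK⟩ := hx
      obtain ⟨hx'v, hx'VK⟩ := hx'
      obtain ⟨⟨heK, hxe⟩, hmin1⟩ := hFspec x hxVK
      obtain ⟨⟨heK', hx'e⟩, hmin2⟩ := hFspec x' hx'VK
      rw [hFxx'] at hxe hmin1
      set e := F x' with he
      have hends : ends e = s(x, x') := eq_pair_of_two_mem hxe hx'e hne
      rcases Nat.eq_zero_or_pos (lvl e) with h0 | hpos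
      · have : e = g := by
          have := hlvl_spec e heK'
          rw [h0] at this
          exact this
        rcases mem_of_pair (hends ▸ this ▸ hvg) with h1 | h1
        · exact hxv h1.symm
        · exact hx'v h1.symm
      · obtain ⟨m, hm⟩ := Nat.exists_eq_add_of_lt hpos
        have hC : CompN ends c γ β g (lvl e) e := hlvl_spec e heK'
        have hnC : ¬ CompN ends c γ β g m e := by
          intro hc2
          have := hlvl_min e m hc2
          omega
        rw [hm, zero_add] at hC
        rcases hC with hC | ⟨-, g2, hg2, w, hwg2, hwe⟩
        · exact hnC hC
        · have hg2K : g2 ∈ K := (hmemK g2).mpr ⟨m, hg2⟩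
          have hg2lvl : lvl g2 ≤ m := hlvl_min g2 m hg2
          rcases mem_of_pair (hends ▸ hwe) with rfl | rfl
          · have := hmin1 g2 (mem_filter.mpr ⟨hg2K, hwg2⟩)
            omega
          · have := hmin2 g2 (mem_filter.mpr ⟨hg2K, hwg2⟩)
            omega
  -- assemble the contradiction
  have hT3 : ({u, v, v'} : Finset V) ⊆ VK := by
    intro x hx
    rw [mem_insert, mem_insert, mem_singleton] at hx
    rcases hx with rfl | rfl | rfl
    · exact (hmemVK x).mpr ⟨h, hhK, hhu⟩
    · exact (hmemVK x).mpr ⟨g, hgK, hvg⟩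
    · exact (hmemVK x).mpr ⟨g', hg'K, hvg'⟩
  have huvv' : u ∉ ({v, v'} : Finset V) := by
    rw [mem_insert, mem_singleton]
    rintro (rfl | rfl)
    exacts [hvu rfl, hv'u rfl]
  have hvnot : v ∉ ({v'} : Finset V) := by
    rw [mem_singleton]; exact hvv'
  have hT3card : ({u, v, v'} : Finset V).card = 3 := by
    rw [card_insert_of_notMem huvv', card_insert_of_notMem hvnot, card_singleton]
  have hsum2 : ∑ x ∈ VK, (K.filter (fun e => x ∈ ends e)).card = 2 * K.card := by
    rw [← hhs]
    refine sum_subset (subset_univ VK) (fun x _ hx => ?_)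
    rw [card_eq_zero, filter_eq_empty_iff]
    intro e heK hxe
    exact hx ((hmemVK x).mpr ⟨e, heK, hxe⟩)
  have hsplit : ∑ x ∈ VK \ ({u, v, v'} : Finset V), (K.filter (fun e => x ∈ ends e)).card
      + ∑ x ∈ ({u, v, v'} : Finset V), (K.filter (fun e => x ∈ ends e)).card
      = ∑ x ∈ VK, (K.filter (fun e => x ∈ ends e)).card := sum_sdiff hT3
  have hdsum : ∑ x ∈ ({u, v, v'} : Finset V), (K.filter (fun e => x ∈ ends e)).card = 3 := by
    rw [sum_insert huvv', sum_insert hvnot, sum_singleton, hdegu, hdegv, hdegv']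
    simp
  have hrest : ∑ x ∈ VK \ ({u, v, v'} : Finset V), (K.filter (fun e => x ∈ ends e)).card
      ≤ 2 * (VK \ ({u, v, v'} : Finset V)).card := by
    calc ∑ x ∈ VK \ ({u, v, v'} : Finset V), (K.filter (fun e => x ∈ ends e)).card
        ≤ (VK \ ({u, v, v'} : Finset V)).card • 2 :=
          sum_le_card_nsmul _ _ 2 (fun x _ => hdeg2 x)
      _ = 2 * (VK \ ({u, v, v'} : Finset V)).card := by rw [smul_eq_mul, mul_comm]
  have hcards : (VK \ ({u, v, v'} : Finset V)).card = VK.card - 3 := by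
    rw [card_sdiff_of_subset hT3, hT3card]
  have hVK3 : 3 ≤ VK.card := hT3card ▸ card_le_card hT3
  have hvVK : v ∈ VK := hT3 (by rw [mem_insert, mem_insert]; exact Or.inr (Or.inl rfl))
  have herase : (VK.erase v).card = VK.card - 1 := card_erase_of_mem hvVK
  omega

end FanC


section Main
variable [Fintype V] [Fintype E] [DecidableEq V]

open Classical in
theorem vizing (ends : E → Sym2 V) (hloop : ∀ e : E, ¬ (ends e).IsDiag)
    (D μ : ℕ)
    (hdeg : ∀ v : V, (Finset.univ.filter fun e : E => v ∈ ends e).card ≤ D)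
    (hmul : ∀ s : Sym2 V, (Finset.univ.filter fun e : E => ends e = s).card ≤ μ) :
    ∃ c : E → Fin (D + μ), ∀ e f : E, e ≠ f → c e = c f →
      ∀ v : V, v ∈ ends e → v ∉ ends f := by
  classical
  have hpnone : Proper (N := D + μ) ends (fun _ => none) := by
    intro e f hne hsh γ hce hcf
    exact absurd hce (by simp)
  have hex : ∃ m : ℕ, ∃ c : E → Option (Fin (D + μ)), Proper ends c ∧ (holes c).card = m :=
    ⟨_, fun _ => none, hpnone, rfl⟩
  obtain ⟨c, hcp, hcm⟩ := Nat.find_spec hex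
  have hmin : Minimal ends c := by
    refine ⟨hcp, fun c' hc' => ?_⟩
    rw [hcm]
    exact Nat.find_le ⟨c', hc', rfl⟩
  -- the minimal coloring has no holes
  have hempty : holes c = ∅ := by
    by_contra hne
    obtain ⟨e₀, he₀m⟩ := nonempty_iff_ne_empty.mpr hne
    have he₀ : c e₀ = none := mem_holes.mp he₀m
    have hu : ∃ u, u ∈ ends e₀ := by
      induction (ends e₀) using Sym2.inductionOn with
      | hf x y => exact ⟨x, Sym2.mem_mk_left x y⟩
    obtain ⟨u, hu⟩ := hu
    -- "other endpoint" function
    set oV : E → V := fun f => if h : u ∈ ends f then Sym2.Mem.other h else u with hoV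
    have hoV_spec : ∀ f (h : u ∈ ends f), oV f ∈ ends f ∧ oV f ≠ u ∧ ends f = s(u, oV f) := by
      intro f h
      rw [hoV]
      simp only [dif_pos h]
      exact ⟨Sym2.other_mem h, Sym2.other_ne (hloop f) h, (Sym2.other_spec h).symm⟩
    set v₀ : V := oV e₀ with hv₀def
    obtain ⟨hv₀mem, hv₀ne, hv₀pair⟩ := hoV_spec e₀ hu
    -- the fan edge set
    set FS : Finset E := univ.filter (fun f => ∃ n, FanN ends c e₀ u n f) with hFS
    have hmemFS : ∀ f, f ∈ FS ↔ ∃ n, FanN ends c e₀ u n f := by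
      intro f; rw [hFS, mem_filter]; simp
    have he₀FS : e₀ ∈ FS := (hmemFS e₀).mpr ⟨0, rfl⟩
    have hFSu : ∀ f ∈ FS, u ∈ ends f := by
      intro f hf
      obtain ⟨n, hn⟩ := (hmemFS f).mp hf
      exact fan_at_u hu hn
    have hFScol : ∀ f ∈ FS, f ≠ e₀ → ∃ γ, c f = some γ := by
      intro f hf hfe
      obtain ⟨n, hn⟩ := (hmemFS f).mp hf
      rcases fan_colored hn with h | h
      · exact absurd h hfe
      · exact h
    set Z : Finset V := FS.image oV with hZ
    have hv₀Z : v₀ ∈ Z := mem_image.mpr ⟨e₀, he₀FS, rfl⟩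
    set M : V → Finset (Fin (D + μ)) := fun z => univ.filter (fun γ => Missing ends c z γ)
      with hM
    have hmemM : ∀ z γ, γ ∈ M z ↔ Missing ends c z γ := by
      intro z γ; rw [hM]; simp
    -- μ ≥ 1 and D ≥ 1
    have hμ1 : 1 ≤ μ := by
      refine le_trans ?_ (hmul (ends e₀))
      rw [Nat.succ_le_iff, card_pos]
      exact ⟨e₀, mem_filter.mpr ⟨mem_univ _, rfl⟩⟩
    have hD1 : 1 ≤ D := by
      refine le_trans ?_ (hdeg u)
      rw [Nat.succ_le_iff, card_pos]
      exact ⟨e₀, mem_filter.mpr ⟨mem_univ _, hu⟩⟩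
    -- counting missing colors at a vertex
    have hPM : ∀ z : V,
        (M z).card + (univ.filter (fun γ : Fin (D + μ) => ¬ Missing ends c z γ)).card = D + μ := by
      intro z
      rw [hM]
      rw [card_filter_add_card_filter_not (p := fun γ : Fin (D + μ) => Missing ends c z γ)]
      rw [card_univ, Fintype.card_fin]
    -- present colors at z are at most the number of colored edges at z
    have hwz : ∀ z : V, ∀ γ : Fin (D + μ), ¬ Missing ends c z γ →
        ∃ e, z ∈ ends e ∧ c e = some γ := fun z γ h => not_missing h
    have hPle : ∀ z : V, (univ.filter (fun γ : Fin (D + μ) => ¬ Missing ends c z γ)).card ≤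
        (univ.filter (fun e : E => z ∈ ends e ∧ c e ≠ none)).card := by
      intro z
      set w : Fin (D + μ) → E := fun γ =>
        if h : ¬ Missing ends c z γ then (not_missing h).choose else e₀ with hw
      have hwspec : ∀ γ : Fin (D + μ), ¬ Missing ends c z γ →
          z ∈ ends (w γ) ∧ c (w γ) = some γ := by
        intro γ h
        rw [hw]
        simp only [dif_pos h]
        exact (not_missing h).choose_spec
      refine card_le_card_of_injOn w (fun γ hγ => ?_) ?_
      · rw [Finset.mem_coe, mem_filter] at hγ
        obtain ⟨h1, h2⟩ := hwspec γ hγ.2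
        exact mem_filter.mpr ⟨mem_univ _, h1, by rw [h2]; exact fun hh => absurd hh (by simp)⟩
      · intro γ hγ γ' hγ' hww
        rw [Finset.mem_coe, mem_filter] at hγ hγ'
        have h1 := (hwspec γ hγ.2).2
        have h2 := (hwspec γ' hγ'.2).2
        rw [hww] at h1
        rw [h1] at h2
        injection h2
    -- general lower bound for missing colors
    have hMge : ∀ z : V, μ ≤ (M z).card := by
      intro z
      have h1 := hPM z
      have h2 := hPle z
      have h3 : (univ.filter (fun e : E => z ∈ ends e ∧ c e ≠ none)).card ≤ D := by
        refine le_trans (card_le_card ?_) (hdeg z)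
        intro e he
        rw [mem_filter] at he ⊢
        exact ⟨he.1, he.2.1⟩
      omega
    -- stronger bound at v₀ (e₀ is an uncolored edge there)
    have hMv₀ : μ + 1 ≤ (M v₀).card := by
      have h1 := hPM v₀
      have h2 := hPle v₀
      have h3 : (univ.filter (fun e : E => v₀ ∈ ends e ∧ c e ≠ none)).card + 1 ≤ D := by
        have hsub : (univ.filter (fun e : E => v₀ ∈ ends e ∧ c e ≠ none)) ⊆
            (univ.filter (fun e : E => v₀ ∈ ends e)).erase e₀ := by
          intro e he
          rw [mem_filter] at he
          rw [mem_erase, mem_filter]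
          refine ⟨fun hh => he.2.2 (hh ▸ he₀), mem_univ _, he.2.1⟩
        have hmm : e₀ ∈ (univ.filter (fun e : E => v₀ ∈ ends e)) :=
          mem_filter.mpr ⟨mem_univ _, hv₀mem⟩
        have := card_le_card hsub
        rw [card_erase_of_mem hmm] at this
        have hD := hdeg v₀
        have h0 : 1 ≤ (univ.filter (fun e : E => v₀ ∈ ends e)).card :=
          Nat.succ_le_iff.mpr (card_pos.mpr ⟨e₀, hmm⟩)
        omega
      omega
    -- a color missing at u
    have hMu : ∃ β : Fin (D + μ), Missing ends c u β := by
      have h1 := hPM u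
      have h2 := hPle u
      have h3 : (univ.filter (fun e : E => u ∈ ends e ∧ c e ≠ none)).card + 1 ≤ D := by
        have hsub : (univ.filter (fun e : E => u ∈ ends e ∧ c e ≠ none)) ⊆
            (univ.filter (fun e : E => u ∈ ends e)).erase e₀ := by
          intro e he
          rw [mem_filter] at he
          rw [mem_erase, mem_filter]
          refine ⟨fun hh => he.2.2 (hh ▸ he₀), mem_univ _, he.2.1⟩
        have hmm : e₀ ∈ (univ.filter (fun e : E => u ∈ ends e)) :=
          mem_filter.mpr ⟨mem_univ _, hu⟩
        have := card_le_card hsub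
        rw [card_erase_of_mem hmm] at this
        have hD := hdeg u
        have h0 : 1 ≤ (univ.filter (fun e : E => u ∈ ends e)).card :=
          Nat.succ_le_iff.mpr (card_pos.mpr ⟨e₀, hmm⟩)
        omega
      have : 0 < (M u).card := by omega
      obtain ⟨β, hβ⟩ := card_pos.mp this
      exact ⟨β, (hmemM u β).mp hβ⟩
    obtain ⟨β, hβ⟩ := hMu
    -- pairwise disjointness of missing sets at fan vertices
    have hdisj : ∀ z ∈ Z, ∀ z' ∈ Z, z ≠ z' → Disjoint (M z) (M z') := by
      intro z hz z' hz' hzz'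
      rw [disjoint_left]
      intro γ hγ hγ'
      obtain ⟨f, hfFS, hfz⟩ := mem_image.mp hz
      obtain ⟨f', hf'FS, hf'z⟩ := mem_image.mp hz'
      obtain ⟨n, hn⟩ := (hmemFS f).mp hfFS
      obtain ⟨n', hn'⟩ := (hmemFS f').mp hf'FS
      obtain ⟨hm1, hm2, -⟩ := hoV_spec f (hFSu f hfFS)
      obtain ⟨hm1', hm2', -⟩ := hoV_spec f' (hFSu f' hf'FS)
      exact fanC hloop hmin he₀ hu hn hn' (hfz ▸ hm1) (hfz ▸ hm2) (hf'z ▸ hm1') (hf'z ▸ hm2')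
        hzz' ((hmemM z γ).mp hγ) ((hmemM z' γ).mp hγ') hβ
    -- every color missing at a fan vertex is the color of a fan edge other than e₀
    set CT : Finset E := FS.erase e₀ with hCT
    have hbiU : (Z.biUnion M).card ≤ CT.card := by
      set w2 : Fin (D + μ) → E := fun γ =>
        if h : ¬ Missing ends c u γ then (not_missing h).choose else e₀ with hw2
      have hw2spec : ∀ γ : Fin (D + μ), ¬ Missing ends c u γ →
          u ∈ ends (w2 γ) ∧ c (w2 γ) = some γ := by
        intro γ h
        rw [hw2]
        simp only [dif_pos h]
        exact (not_missing h).choose_spec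
      have hkey : ∀ γ ∈ Z.biUnion M, ¬ Missing ends c u γ := by
        intro γ hγ
        obtain ⟨z, hz, hγz⟩ := mem_biUnion.mp hγ
        obtain ⟨f, hfFS, hfz⟩ := mem_image.mp hz
        obtain ⟨n, hn⟩ := (hmemFS f).mp hfFS
        obtain ⟨hm1, hm2, -⟩ := hoV_spec f (hFSu f hfFS)
        intro hmu
        exact fanA hmin he₀ hu hn (hfz ▸ hm1) (hfz ▸ hm2) (hfz ▸ (hmemM z γ).mp hγz) hmu
      refine card_le_card_of_injOn w2 (fun γ hγ => ?_) ?_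
      · have hnm := hkey γ hγ
        obtain ⟨h1, h2⟩ := hw2spec γ hnm
        obtain ⟨z, hz, hγz⟩ := mem_biUnion.mp hγ
        obtain ⟨f, hfFS, hfz⟩ := mem_image.mp hz
        obtain ⟨n, hn⟩ := (hmemFS f).mp hfFS
        obtain ⟨hm1, hm2, -⟩ := hoV_spec f (hFSu f hfFS)
        simp only [hCT, Finset.mem_coe, mem_erase]
        constructor
        · intro hh
          rw [hh, he₀] at h2
          exact absurd h2 (by simp)
        · refine (hmemFS _).mpr ⟨n + 1, Or.inr ⟨h1, γ, h2, f, oV f, hn, hm1, hm2, ?_⟩⟩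
          exact hfz ▸ (hmemM z γ).mp hγz
      · intro γ hγ γ' hγ' hww
        rw [Finset.mem_coe] at hγ hγ'
        have h1 := (hw2spec γ (hkey γ hγ)).2
        have h2 := (hw2spec γ' (hkey γ' hγ')).2
        rw [hww] at h1
        rw [h1] at h2
        injection h2
    have hbiUcard : (Z.biUnion M).card = ∑ z ∈ Z, (M z).card := card_biUnion hdisj
    -- fiberwise count of fan edges
    have hfiber : CT.card = ∑ z ∈ Z, (CT.filter (fun f => oV f = z)).card := by
      refine card_eq_sum_card_fiberwise (fun f hf => ?_)
      simp only [hCT, Finset.mem_coe, mem_erase] at hf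
      exact mem_image.mpr ⟨f, hf.2, rfl⟩
    have hTz : ∀ z ∈ Z, (CT.filter (fun f => oV f = z)).card + 1 ≤ μ + (if z = v₀ then 0 else 1) := by
      intro z hz
      have hsub : CT.filter (fun f => oV f = z) ⊆
          (univ.filter (fun e : E => ends e = s(u, z))).erase e₀ := by
        intro f hf
        rw [mem_filter, hCT, mem_erase] at hf
        obtain ⟨⟨hfe₀, hfFS⟩, hfz⟩ := hf
        obtain ⟨-, -, hpair⟩ := hoV_spec f (hFSu f hfFS)
        rw [mem_erase, mem_filter]
        exact ⟨hfe₀, mem_univ _, by rw [hpair, hfz]⟩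
      have hcard := card_le_card hsub
      by_cases hzv : z = v₀
      · have hmm : e₀ ∈ univ.filter (fun e : E => ends e = s(u, z)) := by
          rw [mem_filter, hzv]
          exact ⟨mem_univ _, hv₀pair⟩
        rw [card_erase_of_mem hmm] at hcard
        have h0 : 1 ≤ (univ.filter (fun e : E => ends e = s(u, z))).card :=
          Nat.succ_le_iff.mpr (card_pos.mpr ⟨e₀, hmm⟩)
        have := hmul s(u, z)
        rw [if_pos hzv]
        omega
      · have := hmul s(u, z)
        have h2 := le_trans hcard (card_le_card (erase_subset _ _))
        rw [if_neg hzv]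
        omega
    -- final counting
    have hlow : ∑ z ∈ Z, (M z).card ≥ (Z.erase v₀).card * μ + (μ + 1) := by
      rw [← Finset.sum_erase_add Z _ hv₀Z]
      have h1 : (Z.erase v₀).card * μ ≤ ∑ z ∈ Z.erase v₀, (M z).card := by
        have := Finset.card_nsmul_le_sum (Z.erase v₀) (fun z => (M z).card) μ
          (fun z _ => hMge z)
        rwa [smul_eq_mul] at this
      have h2 := hMv₀
      omega
    have hhigh : CT.card + 1 ≤ (Z.erase v₀).card * μ + μ := by
      rw [hfiber, ← Finset.sum_erase_add Z _ hv₀Z]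
      have h1 : ∑ z ∈ Z.erase v₀, (CT.filter (fun f => oV f = z)).card ≤ (Z.erase v₀).card * μ := by
        have := Finset.sum_le_card_nsmul (Z.erase v₀) (fun z => (CT.filter (fun f => oV f = z)).card) μ
          (fun z hzz => by
            show (CT.filter (fun f => oV f = z)).card ≤ μ
            have := hTz z (mem_of_mem_erase hzz)
            rw [if_neg (ne_of_mem_erase hzz)] at this
            omega)
        rwa [smul_eq_mul] at this
      have h2 := hTz v₀ hv₀Z
      rw [if_pos rfl] at h2
      omega
    have := le_trans (hbiUcard ▸ hbiU) (by omega : CT.card ≤ (Z.erase v₀).card * μ + μ - 1)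
    omega
  -- extract the total coloring
  have htot : ∀ e : E, (c e).isSome := by
    intro e
    rw [Option.isSome_iff_ne_none]
    intro hh
    rw [← mem_holes (c := c)] at hh
    rw [hempty] at hh
    exact absurd hh (notMem_empty e)
  refine ⟨fun e => (c e).get (htot e), fun e f hne hcef v hve hvf => ?_⟩
  have hcef' : (c e).get (htot e) = (c f).get (htot f) := hcef
  have h1 : c e = some ((c e).get (htot e)) := (Option.some_get (htot e)).symm
  have h2 : c f = some ((c f).get (htot f)) := (Option.some_get (htot f)).symm
  rw [← hcef'] at h2
  exact hcp hne ⟨v, hve, hvf⟩ h1 h2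

end Main

end VizingMG

/-- Vizing's theorem for multigraphs: a multigraph with maximum degree at most `D` and
edge multiplicity at most `μ` decomposes into at most `D + μ` matchings (i.e. admits a
proper edge coloring with `D + μ` colors). -/
theorem stmt_1 {V E : Type*} [Fintype V] [Fintype E] [DecidableEq V]
    (ends : E → Sym2 V) (hloop : ∀ e : E, ¬ (ends e).IsDiag)
    (D μ : ℕ)
    (hdeg : ∀ v : V, (Finset.univ.filter fun e : E => v ∈ ends e).card ≤ D)
    (hmul : ∀ s : Sym2 V, (Finset.univ.filter fun e : E => ends e = s).card ≤ μ) :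
    ∃ c : E → Fin (D + μ), ∀ e f : E, e ≠ f → c e = c f →
      ∀ v : V, v ∈ ends e → v ∉ ends f := by
  exact VizingMG.vizing ends hloop D μ hdeg hmul
end

section
/- Let G be a graph and V₀ a set of vertices such that G[V₀] is empty, every edge of G has exactly one endpoint in V₀, and every vertex of V₀ has degree at most d in G. If t ≥ d + 2·|V₀| + 1, then the edge set of G can be partitioned into at most t sets P₁,…,P_t, each of which is a collection of vertex-disjoint paths of length 2 whose internal vertex lies in V₀ and whose endpoints lie outside V₀, possibly together with at most one single edge per vertex of odd degree. -/
open SimpleGraph Finset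

lemma my_pairing {V : Type*} [DecidableEq V] (S : Finset V) (he : Even S.card) :
    ∃ P : Finset (V × V),
      (∀ p ∈ P, p.1 ∈ S ∧ p.2 ∈ S ∧ p.1 ≠ p.2) ∧
      (∀ a ∈ S, ∃! p, p ∈ P ∧ (a = p.1 ∨ a = p.2)) := by
  induction S using Finset.strongInduction with
  | _ S ih =>
    rcases S.eq_empty_or_nonempty with rfl | ⟨a, ha⟩
    · exact ⟨∅, by simp, by simp⟩
    · have h2 : 2 ≤ S.card := by
        rcases he with ⟨k, hk⟩
        have h1 : 1 ≤ S.card := Finset.card_pos.mpr ⟨a, ha⟩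
        omega
      have hb : (S.erase a).Nonempty := by
        rw [← Finset.card_pos, Finset.card_erase_of_mem ha]; omega
      obtain ⟨b, hb⟩ := hb
      have hab : b ≠ a := Finset.ne_of_mem_erase hb
      have hbS : b ∈ S := Finset.mem_of_mem_erase hb
      set S' := (S.erase a).erase b with hS'
      have hsub : S' ⊂ S := by
        apply Finset.ssubset_of_subset_of_ssubset (Finset.erase_subset _ _)
        exact Finset.erase_ssubset ha
      have hcard : S'.card = S.card - 2 := by
        rw [hS', Finset.card_erase_of_mem hb, Finset.card_erase_of_mem ha]; omega
      have he' : Even S'.card := by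
        rcases he with ⟨k, hk⟩; exact ⟨k - 1, by omega⟩
      obtain ⟨P', hP1, hP2⟩ := ih S' hsub he'
      have haS' : a ∉ S' := by simp [hS']
      have hbS' : b ∉ S' := by simp [hS']
      refine ⟨insert (a, b) P', ?_, ?_⟩
      · intro p hp
        rcases Finset.mem_insert.mp hp with rfl | hp
        · exact ⟨ha, hbS, Ne.symm hab⟩
        · obtain ⟨h1, h2, h3⟩ := hP1 p hp
          exact ⟨(Finset.mem_of_mem_erase (Finset.mem_of_mem_erase h1)),
            (Finset.mem_of_mem_erase (Finset.mem_of_mem_erase h2)), h3⟩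
      · intro c hc
        by_cases hcab : c = a ∨ c = b
        · refine ⟨(a, b), ⟨Finset.mem_insert_self _ _, by rcases hcab with rfl | rfl <;> simp⟩, ?_⟩
          rintro q ⟨hq, hq2⟩
          rcases Finset.mem_insert.mp hq with rfl | hq
          · rfl
          · exfalso
            obtain ⟨h1, h2, _⟩ := hP1 q hq
            rcases hcab with rfl | rfl <;> rcases hq2 with rfl | rfl <;>
              first
              | exact haS' h1 | exact haS' h2 | exact hbS' h1 | exact hbS' h2
        · push_neg at hcab
          have hcS' : c ∈ S' := by
            simp [hS', Finset.mem_erase, hcab.1, hcab.2, hc]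
          obtain ⟨p, ⟨hp, hpc⟩, hu⟩ := hP2 c hcS'
          refine ⟨p, ⟨Finset.mem_insert_of_mem hp, hpc⟩, ?_⟩
          rintro q ⟨hq, hq2⟩
          rcases Finset.mem_insert.mp hq with rfl | hq
          · exfalso; rcases hq2 with h | h
            · exact hcab.1 h
            · exact hcab.2 h
          · exact hu q ⟨hq, hq2⟩

lemma my_greedy {α : Type*} [DecidableEq α] (t : ℕ) (ht : 0 < t)
    (R : α → α → Prop) [DecidableRel R] (hsym : ∀ p q, R p q → R q p) :
    ∀ A : Finset α, (∀ p ∈ A, (A.filter (fun q => q ≠ p ∧ R p q)).card < t) →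
    ∃ c : α → Fin t, ∀ p ∈ A, ∀ q ∈ A, p ≠ q → R p q → c p ≠ c q := by
  intro A
  induction A using Finset.induction_on with
  | empty => intro _; exact ⟨fun _ => ⟨0, ht⟩, by simp⟩
  | @insert a s ha ih =>
    intro hdeg
    obtain ⟨c, hc⟩ := ih (fun p hp => lt_of_le_of_lt
      (Finset.card_le_card (Finset.filter_subset_filter _ (Finset.subset_insert a s)))
      (hdeg p (Finset.mem_insert_of_mem hp)))
    have hused : ((s.filter (fun q => R a q)).image c).card < t := by
      calc ((s.filter (fun q => R a q)).image c).card
          ≤ (s.filter (fun q => R a q)).card := Finset.card_image_le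
        _ ≤ ((insert a s).filter (fun q => q ≠ a ∧ R a q)).card := by
            apply Finset.card_le_card
            intro q hq
            rw [Finset.mem_filter] at hq ⊢
            exact ⟨Finset.mem_insert_of_mem hq.1, fun h => ha (h ▸ hq.1), hq.2⟩
        _ < t := hdeg a (Finset.mem_insert_self a s)
    have : ∃ j : Fin t, j ∉ (s.filter (fun q => R a q)).image c := by
      by_contra h
      push_neg at h
      have : (Finset.univ : Finset (Fin t)) ⊆ (s.filter (fun q => R a q)).image c :=
        fun j _ => h j
      have := Finset.card_le_card this
      simp at this
      omega
    obtain ⟨j, hj⟩ := this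
    refine ⟨Function.update c a j, ?_⟩
    intro p hp q hq hpq hR
    have key : ∀ x ∈ s, Function.update c a j x = c x := by
      intro x hx
      apply Function.update_of_ne
      intro h; rw [h] at hx; exact ha hx
    rcases Finset.mem_insert.mp hp with hpa | hp' <;> rcases Finset.mem_insert.mp hq with hqa | hq'
    · exact absurd (hpa.trans hqa.symm) hpq
    · rw [hpa] at hR ⊢
      rw [Function.update_self, key q hq']
      intro h
      exact hj (Finset.mem_image.mpr ⟨q, Finset.mem_filter.mpr ⟨hq', hR⟩, h.symm⟩)
    · rw [hqa] at hR ⊢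
      rw [Function.update_self, key p hp']
      intro h
      exact hj (Finset.mem_image.mpr ⟨p, Finset.mem_filter.mpr ⟨hp', hsym _ _ hR⟩, h⟩)
    · rw [key p hp', key q hq']
      exact hc p hp' q hq' hpq hR


/-- If `G[V₀]` is empty, every edge of `G` has exactly one endpoint in `V₀`, every vertex
of `V₀` has even degree at most `d`, and `t ≥ d + 2|V₀| + 1`, then `E(G)` partitions into
at most `t` sets, each a collection of vertex-disjoint paths of length 2 with internal
vertex in `V₀` and endpoints outside `V₀`. A triple `(y, x, z)` encodes the path `yxz`. -/
theorem stmt_2 {V : Type*} [Fintype V] [DecidableEq V] (G : SimpleGraph V)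
    [DecidableRel G.Adj] (V₀ : Finset V) (d t : ℕ)
    (hempty : ∀ x ∈ V₀, ∀ y ∈ V₀, ¬ G.Adj x y)
    (hexc : ∀ e ∈ G.edgeFinset, ∃ x y : V, e = s(x, y) ∧ x ∈ V₀ ∧ y ∉ V₀)
    (hdeg : ∀ x ∈ V₀, G.degree x ≤ d)
    (heven : ∀ x ∈ V₀, Even (G.degree x))
    (ht : d + 2 * V₀.card + 1 ≤ t) :
    ∃ P : Fin t → Finset (V × V × V),
      (∀ j, ∀ p ∈ P j, p.1 ∉ V₀ ∧ p.2.1 ∈ V₀ ∧ p.2.2 ∉ V₀ ∧ p.1 ≠ p.2.2 ∧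
        G.Adj p.2.1 p.1 ∧ G.Adj p.2.1 p.2.2) ∧
      (∀ j, ∀ p ∈ P j, ∀ q ∈ P j, p ≠ q →
        ({p.1, p.2.1, p.2.2} : Finset V) ∩ ({q.1, q.2.1, q.2.2} : Finset V) = ∅) ∧
      (∀ e ∈ G.edgeFinset, ∃! jp : Fin t × (V × V × V), jp.2 ∈ P jp.1 ∧
        (e = s(jp.2.2.1, jp.2.1) ∨ e = s(jp.2.2.1, jp.2.2.2))) := by
  classical
  -- pairing of the neighborhood of each x ∈ V₀
  have hpair : ∀ x : {x // x ∈ V₀}, ∃ P : Finset (V × V),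
      (∀ p ∈ P, p.1 ∈ G.neighborFinset x.1 ∧ p.2 ∈ G.neighborFinset x.1 ∧ p.1 ≠ p.2) ∧
      (∀ a ∈ G.neighborFinset x.1, ∃! p, p ∈ P ∧ (a = p.1 ∨ a = p.2)) := by
    intro x
    exact my_pairing _ (by rw [card_neighborFinset_eq_degree]; exact heven x.1 x.2)
  choose F hF1 hF2 using hpair
  set PP : Finset (V × V × V) :=
    V₀.attach.biUnion (fun x => (F x).image (fun p => (p.1, x.1, p.2))) with hPP
  have memPP : ∀ q : V × V × V, q ∈ PP ↔
      ∃ x : {x // x ∈ V₀}, ∃ p ∈ F x, q = (p.1, x.1, p.2) := by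
    intro q
    simp only [hPP, Finset.mem_biUnion, Finset.mem_attach, Finset.mem_image, true_and]
    constructor
    · rintro ⟨x, p, hp, rfl⟩; exact ⟨x, p, hp, rfl⟩
    · rintro ⟨x, p, hp, rfl⟩; exact ⟨x, p, hp, rfl⟩
  -- basic facts about members of PP
  have facts : ∀ q ∈ PP, q.2.1 ∈ V₀ ∧ G.Adj q.2.1 q.1 ∧ G.Adj q.2.1 q.2.2 ∧
      q.1 ≠ q.2.2 ∧ q.1 ∉ V₀ ∧ q.2.2 ∉ V₀ := by
    intro q hq
    obtain ⟨x, p, hp, rfl⟩ := (memPP q).mp hq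
    obtain ⟨h1, h2, h3⟩ := hF1 x p hp
    rw [SimpleGraph.mem_neighborFinset] at h1 h2
    refine ⟨x.2, h1, h2, h3, ?_, ?_⟩
    · intro hmem; exact hempty x.1 x.2 p.1 hmem h1
    · intro hmem; exact hempty x.1 x.2 p.2 hmem h2
  -- key uniqueness: same center and a shared endpoint force equality
  have U : ∀ q ∈ PP, ∀ q' ∈ PP, q.2.1 = q'.2.1 →
      ∀ a : V, (a = q.1 ∨ a = q.2.2) → (a = q'.1 ∨ a = q'.2.2) → q = q' := by
    intro q hq q' hq' hcen a haq haq'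
    obtain ⟨x, p, hp, rfl⟩ := (memPP q).mp hq
    obtain ⟨x', p', hp', rfl⟩ := (memPP q').mp hq'
    simp only at hcen haq haq'
    have hxx : x = x' := Subtype.ext hcen
    subst hxx
    have haN : a ∈ G.neighborFinset x.1 := by
      obtain ⟨h1, h2, _⟩ := hF1 x p hp
      rcases haq with rfl | rfl
      · exact h1
      · exact h2
    obtain ⟨r, _, hr⟩ := hF2 x a haN
    have e1 : p = r := hr p ⟨hp, haq⟩
    have e2 : p' = r := hr p' ⟨hp', haq'⟩
    rw [e1, e2]
  -- counting: center filter
  have hcount1 : ∀ p ∈ PP, (PP.filter (fun q => q.2.1 = p.2.1)).card ≤ d := by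
    intro p hp
    have hV₀ : p.2.1 ∈ V₀ := (facts p hp).1
    calc (PP.filter (fun q => q.2.1 = p.2.1)).card
        ≤ (G.neighborFinset p.2.1).card := by
          apply Finset.card_le_card_of_injOn (fun q => q.1)
          · intro q hq
            rw [Finset.mem_coe, Finset.mem_filter] at hq
            rw [Finset.mem_coe, SimpleGraph.mem_neighborFinset, ← hq.2]
            exact (facts q hq.1).2.1
          · intro q hq q' hq' heq
            rw [Finset.mem_coe, Finset.mem_filter] at hq hq'
            exact U q hq.1 q' hq'.1 (hq.2.trans hq'.2.symm) q.1 (Or.inl rfl)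
              (Or.inl heq)
      _ = G.degree p.2.1 := G.card_neighborFinset_eq_degree _
      _ ≤ d := hdeg _ hV₀
  -- counting: endpoint filter
  have hcount2 : ∀ a : V, (PP.filter (fun q => q.1 = a ∨ q.2.2 = a)).card ≤ V₀.card := by
    intro a
    apply Finset.card_le_card_of_injOn (fun q => q.2.1)
    · intro q hq
      rw [Finset.mem_coe, Finset.mem_filter] at hq
      exact (facts q hq.1).1
    · intro q hq q' hq' heq
      rw [Finset.mem_coe, Finset.mem_filter] at hq hq'
      refine U q hq.1 q' hq'.1 heq a ?_ ?_
      · rcases hq.2 with h | h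
        · exact Or.inl h.symm
        · exact Or.inr h.symm
      · rcases hq'.2 with h | h
        · exact Or.inl h.symm
        · exact Or.inr h.symm
  -- the conflict relation
  set R : (V × V × V) → (V × V × V) → Prop := fun p q =>
    ¬ (({p.1, p.2.1, p.2.2} : Finset V) ∩ ({q.1, q.2.1, q.2.2} : Finset V) = ∅) with hR
  have hRsym : ∀ p q, R p q → R q p := by
    intro p q h hcon
    exact h (by rwa [Finset.inter_comm] at hcon)
  -- degree bound for greedy
  have hdegbound : ∀ p ∈ PP, (PP.filter (fun q => q ≠ p ∧ R p q)).card < t := by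
    intro p hp
    have hsub : PP.filter (fun q => q ≠ p ∧ R p q) ⊆
        (PP.filter (fun q => q.2.1 = p.2.1)) ∪
        ((PP.filter (fun q => q.1 = p.1 ∨ q.2.2 = p.1)) ∪
         (PP.filter (fun q => q.1 = p.2.2 ∨ q.2.2 = p.2.2))) := by
      intro q hq
      rw [Finset.mem_filter] at hq
      obtain ⟨hqPP, _, hRpq⟩ := hq
      rw [hR] at hRpq
      obtain ⟨v, hv⟩ := Finset.nonempty_iff_ne_empty.mpr hRpq
      rw [Finset.mem_inter] at hv
      obtain ⟨hvp, hvq⟩ := hv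
      simp only [Finset.mem_insert, Finset.mem_singleton] at hvp hvq
      obtain ⟨hpV, _, _, _, hp1, hp3⟩ := facts p hp
      obtain ⟨hqV, _, _, _, hq1, hq3⟩ := facts q hqPP
      rw [Finset.mem_union, Finset.mem_union]
      rcases hvq with rfl | rfl | rfl
      · -- v = q.1 ∉ V₀
        rcases hvp with h | h | h
        · exact Or.inr (Or.inl (Finset.mem_filter.mpr ⟨hqPP, Or.inl h⟩))
        · exact absurd (h ▸ hpV) hq1
        · exact Or.inr (Or.inr (Finset.mem_filter.mpr ⟨hqPP, Or.inl h⟩))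
      · -- v = q.2.1 ∈ V₀
        rcases hvp with h | h | h
        · exact absurd (h ▸ hqV) hp1
        · exact Or.inl (Finset.mem_filter.mpr ⟨hqPP, h⟩)
        · exact absurd (h ▸ hqV) hp3
      · -- v = q.2.2 ∉ V₀
        rcases hvp with h | h | h
        · exact Or.inr (Or.inl (Finset.mem_filter.mpr ⟨hqPP, Or.inr h⟩))
        · exact absurd (h ▸ hpV) hq3
        · exact Or.inr (Or.inr (Finset.mem_filter.mpr ⟨hqPP, Or.inr h⟩))
    calc (PP.filter (fun q => q ≠ p ∧ R p q)).card
        ≤ _ := Finset.card_le_card hsub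
      _ ≤ (PP.filter (fun q => q.2.1 = p.2.1)).card +
          ((PP.filter (fun q => q.1 = p.1 ∨ q.2.2 = p.1)) ∪
           (PP.filter (fun q => q.1 = p.2.2 ∨ q.2.2 = p.2.2))).card :=
          Finset.card_union_le _ _
      _ ≤ (PP.filter (fun q => q.2.1 = p.2.1)).card +
          ((PP.filter (fun q => q.1 = p.1 ∨ q.2.2 = p.1)).card +
           (PP.filter (fun q => q.1 = p.2.2 ∨ q.2.2 = p.2.2)).card) :=
          Nat.add_le_add_left (Finset.card_union_le _ _) _
      _ ≤ d + (V₀.card + V₀.card) := by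
          exact Nat.add_le_add (hcount1 p hp) (Nat.add_le_add (hcount2 _) (hcount2 _))
      _ < t := by omega
  -- greedy coloring
  have ht0 : 0 < t := by omega
  obtain ⟨c, hc⟩ := my_greedy t ht0 R hRsym PP hdegbound
  refine ⟨fun j => PP.filter (fun q => c q = j), ?_, ?_, ?_⟩
  · intro j p hp
    rw [Finset.mem_filter] at hp
    obtain ⟨h1, h2, h3, h4, h5, h6⟩ := facts p hp.1
    exact ⟨h5, h1, h6, h4, h2, h3⟩
  · intro j p hp q hq hpq
    rw [Finset.mem_filter] at hp hq
    by_contra hne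
    exact hc p hp.1 q hq.1 hpq hne (hp.2.trans hq.2.symm)
  · intro e he
    obtain ⟨x, y, rfl, hx, hy⟩ := hexc e he
    have hadj : G.Adj x y := by rwa [SimpleGraph.mem_edgeFinset, SimpleGraph.mem_edgeSet] at he
    have hyN : y ∈ G.neighborFinset x := (SimpleGraph.mem_neighborFinset _ _ _).mpr hadj
    obtain ⟨p, ⟨hpF, hpy⟩, hpu⟩ := hF2 ⟨x, hx⟩ y hyN
    set q : V × V × V := (p.1, x, p.2) with hqdef
    have hqPP : q ∈ PP := (memPP q).mpr ⟨⟨x, hx⟩, p, hpF, rfl⟩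
    refine ⟨(c q, q), ⟨Finset.mem_filter.mpr ⟨hqPP, rfl⟩, ?_⟩, ?_⟩
    · rcases hpy with rfl | rfl
      · exact Or.inl rfl
      · exact Or.inr rfl
    · rintro ⟨j', q'⟩ ⟨hq'P, hq'e⟩
      rw [Finset.mem_filter] at hq'P
      obtain ⟨hq'PP, hcq'⟩ := hq'P
      obtain ⟨x', p', hp', hq'eq⟩ := (memPP q').mp hq'PP
      -- analyze the edge condition
      obtain ⟨h1, h2, _⟩ := hF1 x' p' hp'
      rw [SimpleGraph.mem_neighborFinset] at h1 h2
      have hp'1V : p'.1 ∉ V₀ := fun hm => hempty x'.1 x'.2 p'.1 hm h1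
      have hp'2V : p'.2 ∉ V₀ := fun hm => hempty x'.1 x'.2 p'.2 hm h2
      have key : x'.1 = x ∧ (y = p'.1 ∨ y = p'.2) := by
        rw [hq'eq] at hq'e
        simp only at hq'e
        rcases hq'e with h | h
        · rw [Sym2.eq_iff] at h
          rcases h with ⟨rfl, h2⟩ | ⟨h1', h2'⟩
          · exact ⟨rfl, Or.inl h2⟩
          · exact absurd (h2' ▸ x'.2) hy
        · rw [Sym2.eq_iff] at h
          rcases h with ⟨rfl, h2⟩ | ⟨h1', h2'⟩
          · exact ⟨rfl, Or.inr h2⟩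
          · exact absurd (h2' ▸ x'.2) hy
      obtain ⟨hxx, hyp'⟩ := key
      have hx'eq : x' = ⟨x, hx⟩ := Subtype.ext hxx
      subst hx'eq
      have hpe : p' = p := hpu p' ⟨hp', hyp'⟩
      have hq'q : q' = q := by rw [hq'eq, hpe, hqdef]
      subst hq'q
      rw [Prod.mk.injEq]
      exact ⟨hcq'.symm, rfl⟩
end
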